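/- Let m ≥ 2 and 2* = 2m/(m-1). For α > 0 and 2 < p < 2*, the function F(s) = α·s^p satisfies: (i) its derivative-based density f(s) := F'(s)/s = α·p·s^{p-2} is continuous on [0,∞) with f(0)=0; (ii) f(s)·s / F(s)^{(m+1)/(2m)} → 0 as s → ∞; (iii) lim_{ϱ→0⁺} ϱ^{m-1}/|ln ϱ|^{max{3-m,0}} · ∫₀^{1/ϱ} F( ϱ^{-(m-1)/2} / (1+r²)^{(m-1)/2} ) · r^{m-1} dr = ∞. -/

import Mathlib

open MeasureTheory Filter

theorem stmt3 (m : ℕ) (hm : 2 ≤ m) (α p : ℝ) (hα : 0 < α)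
    (twoStar : ℝ) (h2 : twoStar = 2 * m / ((m:ℝ) - 1))
    (hp : 2 < p) (hp' : p < twoStar)
    (F f : ℝ → ℝ) (hF : ∀ s, F s = α * s ^ p)
    (hf : ∀ s, f s = α * p * s ^ (p - 2)) :
    (ContinuousOn f (Set.Ici 0) ∧ f 0 = 0) ∧
    Tendsto (fun s : ℝ => f s * s / (F s) ^ (((m:ℝ) + 1) / (2 * (m:ℝ)))) atTop (nhds 0) ∧
    Tendsto (fun ϱ : ℝ =>
        ϱ ^ ((m:ℝ) - 1) / |Real.log ϱ| ^ (max (3 - (m:ℝ)) 0) *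
          ∫ r in (0:ℝ)..(1/ϱ),
            F (ϱ ^ (-(((m:ℝ) - 1) / 2)) / (1 + r ^ 2) ^ (((m:ℝ) - 1) / 2)) * r ^ ((m:ℝ) - 1))
      (nhdsWithin 0 (Set.Ioi 0)) atTop := by
  have hM : (2:ℝ) ≤ (m:ℝ) := by exact_mod_cast hm
  have hM1 : (0:ℝ) < (m:ℝ) - 1 := by linarith
  refine ⟨⟨?_, ?_⟩, ?_, ?_⟩
  · -- continuity
    have hc : ContinuousOn (fun s : ℝ => α * p * s ^ (p - 2)) (Set.Ici 0) :=
      continuousOn_const.mul (continuousOn_id.rpow_const fun x _ => Or.inr (by linarith))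
    exact hc.congr fun s _ => hf s
  · rw [hf, Real.zero_rpow (by intro h; linarith [sub_eq_zero.mp h] : p - 2 ≠ 0), mul_zero]
  · -- second limit
    set q : ℝ := ((m:ℝ) + 1) / (2 * (m:ℝ)) with hq
    have h2m : (0:ℝ) < 2 * (m:ℝ) := by linarith
    have hpq : p * ((m:ℝ) - 1) < 2 * (m:ℝ) := by
      rw [h2] at hp'
      calc p * ((m:ℝ) - 1) < 2 * (m:ℝ) / ((m:ℝ) - 1) * ((m:ℝ) - 1) :=
            mul_lt_mul_of_pos_right hp' hM1
        _ = 2 * (m:ℝ) := by field_simp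
    have hneg : p - 1 - p * q < 0 := by
      have h : p - 1 < p * q := by
        rw [hq, ← mul_div_assoc, lt_div_iff₀ h2m]; nlinarith
      linarith
    have hT : Tendsto (fun s : ℝ => α * p / α ^ q * s ^ (p - 1 - p * q)) atTop (nhds 0) := by
      have h := (tendsto_rpow_neg_atTop (y := -(p - 1 - p * q))
        (by linarith)).const_mul (α * p / α ^ q)
      simpa using h
    refine hT.congr' ?_
    filter_upwards [eventually_gt_atTop (0:ℝ)] with s hs
    have hαq : (0:ℝ) < α ^ q := Real.rpow_pos_of_pos hα q
    have hspq : (0:ℝ) < s ^ (p * q) := Real.rpow_pos_of_pos hs _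
    have h1 : (α * s ^ p) ^ q = α ^ q * s ^ (p * q) := by
      rw [Real.mul_rpow hα.le (Real.rpow_nonneg hs.le p), ← Real.rpow_mul hs.le]
    have h3 : s ^ (p - 1 - p * q) = s ^ (p - 2) * s * (s ^ (p * q))⁻¹ := by
      rw [← Real.rpow_add_one hs.ne' (p - 2), ← Real.rpow_neg hs.le,
        ← Real.rpow_add hs]
      congr 1; ring
    rw [hf, hF, h1, h3]
    field_simp
  · -- third limit
    set μ : ℝ := max (3 - (m:ℝ)) 0 with hμ
    set β : ℝ := ((m:ℝ) - 1) / 2 * p with hβ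
    set g : ℝ → ℝ := fun r => (1 + r ^ 2) ^ (-β) * r ^ ((m:ℝ) - 1) with hg
    have hgcont : ContinuousOn g (Set.Ici 0) := by
      apply ContinuousOn.mul
      · apply ContinuousOn.rpow_const
        · exact continuousOn_const.add (continuousOn_pow 2)
        · intro x _; left; positivity
      · exact continuousOn_id.rpow_const fun x _ => Or.inr (by linarith)
    have hgint : ∀ T : ℝ, 0 ≤ T → IntervalIntegrable g volume 0 T := by
      intro T hT
      apply (hgcont.mono ?_).intervalIntegrable
      rw [Set.uIcc_of_le hT]
      exact fun x hx => hx.1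
    set K : ℝ := ∫ r in (0:ℝ)..1, g r with hKdef
    have hK : 0 < K := by
      apply intervalIntegral.intervalIntegral_pos_of_pos_on (hgint 1 one_pos.le) ?_ one_pos
      intro x hx
      simp only [hg]
      exact mul_pos (Real.rpow_pos_of_pos (by positivity) _)
        (Real.rpow_pos_of_pos hx.1 _)
    set c : ℝ := β - ((m:ℝ) - 1) with hc
    have hcpos : 0 < c := by
      rw [hc, hβ]; nlinarith
    -- limit of the minorant
    have hLlim : Tendsto (fun x : ℝ => x ^ (-c) / |Real.log x| ^ μ)
        (nhdsWithin 0 (Set.Ioi 0)) atTop := by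
      have h1 := (isLittleO_abs_log_rpow_rpow_nhdsGT_zero μ
        (by linarith : -c < 0)).tendsto_div_nhds_zero
      have h2 : Tendsto (fun x : ℝ => |Real.log x| ^ μ / x ^ (-c))
          (nhdsWithin 0 (Set.Ioi 0)) (nhdsWithin 0 (Set.Ioi 0)) := by
        apply tendsto_nhdsWithin_of_tendsto_nhds_of_eventually_within _ h1
        filter_upwards [Ioo_mem_nhdsGT_of_mem
          (by norm_num : (0:ℝ) ∈ Set.Ico (0:ℝ) 1)] with x hx
        have hx0 : (0:ℝ) < x := hx.1
        have hlog : Real.log x < 0 := Real.log_neg hx0 hx.2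
        have habs : 0 < |Real.log x| := abs_pos.mpr hlog.ne
        have : 0 < |Real.log x| ^ μ / x ^ (-c) :=
          div_pos (Real.rpow_pos_of_pos habs _) (Real.rpow_pos_of_pos hx0 _)
        exact this
      have h3 := h2.inv_tendsto_nhdsGT_zero
      refine h3.congr fun x => ?_
      simp [inv_div]
    have hLlim' : Tendsto (fun x : ℝ => α * K * (x ^ (-c) / |Real.log x| ^ μ))
        (nhdsWithin 0 (Set.Ioi 0)) atTop := hLlim.const_mul_atTop (by positivity)
    apply tendsto_atTop_mono' _ _ hLlim'
    filter_upwards [Ioo_mem_nhdsGT_of_mem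
      (by norm_num : (0:ℝ) ∈ Set.Ico (0:ℝ) 1)] with ϱ hϱ
    have hϱ0 : (0:ℝ) < ϱ := hϱ.1
    have hϱ1 : ϱ < 1 := hϱ.2
    have hD : 0 < |Real.log ϱ| ^ μ :=
      Real.rpow_pos_of_pos (abs_pos.mpr (Real.log_neg hϱ0 hϱ1).ne) _
    -- rewrite the integral
    have hintid : ∀ r : ℝ,
        F (ϱ ^ (-(((m:ℝ) - 1) / 2)) / (1 + r ^ 2) ^ (((m:ℝ) - 1) / 2)) * r ^ ((m:ℝ) - 1)
          = α * ϱ ^ (-β) * g r := by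
      intro r
      have h1r : (0:ℝ) < 1 + r ^ 2 := by positivity
      have e1 : -(((m:ℝ) - 1) / 2) * p = -β := by rw [hβ]; ring
      have e2 : ((m:ℝ) - 1) / 2 * p = β := by rw [hβ]
      rw [hF, Real.div_rpow (Real.rpow_nonneg hϱ0.le _) (Real.rpow_nonneg h1r.le _),
        ← Real.rpow_mul hϱ0.le, ← Real.rpow_mul h1r.le, e1, e2]
      simp only [hg]
      rw [Real.rpow_neg h1r.le β]
      ring
    have hIeq : (∫ r in (0:ℝ)..(1/ϱ),
        F (ϱ ^ (-(((m:ℝ) - 1) / 2)) / (1 + r ^ 2) ^ (((m:ℝ) - 1) / 2)) * r ^ ((m:ℝ) - 1))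
        = α * ϱ ^ (-β) * ∫ r in (0:ℝ)..(1/ϱ), g r := by
      rw [← intervalIntegral.integral_const_mul]
      exact intervalIntegral.integral_congr fun r _ => hintid r
    have hmono : K ≤ ∫ r in (0:ℝ)..(1/ϱ), g r := by
      apply intervalIntegral.integral_mono_interval le_rfl zero_le_one
        ((le_div_iff₀ hϱ0).mpr (by nlinarith))
      · filter_upwards [ae_restrict_mem measurableSet_Ioc] with x hx
        simp only [hg]
        exact mul_nonneg (Real.rpow_nonneg (by positivity) _)
          (Real.rpow_nonneg hx.1.le _)
      · exact hgint (1/ϱ) (by positivity)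
    rw [hIeq]
    have hsplit : ϱ ^ (-c) = ϱ ^ ((m:ℝ) - 1) * ϱ ^ (-β) := by
      rw [← Real.rpow_add hϱ0]; congr 1; rw [hc]; ring
    have h1 : α * K * (ϱ ^ (-c) / |Real.log ϱ| ^ μ)
        = ϱ ^ ((m:ℝ) - 1) / |Real.log ϱ| ^ μ * (α * ϱ ^ (-β) * K) := by
      rw [hsplit]; field_simp
    rw [h1]
    apply mul_le_mul_of_nonneg_left _ (by positivity)
    exact mul_le_mul_of_nonneg_left hmono (by positivity)
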